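/- Let Sk(v) be an indecomposable Kac-Moody component of type (Aff) such that the set of Cartan matrices {A^u : u in Sp(v)} is finite. Then the group Sp^D(v) is finite if and only if the spine Sp(v) is finite. -/

import Mathlib

open scoped ComplexOrder

attribute [local instance] Classical.propDecidable

namespace KMS

noncomputable section

variable (X : Type*) [Fintype X] (H : Type*) [AddCommGroup H] [Module ℂ H]

/-- A root datum: maps `a : X → h`, `b : X → h*`, parity `p`, with `a`, `b`
linearly independent families (the "injectivity" of the induced maps from the span of `X`). -/
structure RootDatum where
  a : X → H
  b : X → Module.Dual ℂ H
  p : X → ZMod 2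
  lin_indep_a : LinearIndependent ℂ a
  lin_indep_b : LinearIndependent ℂ b

variable {X H}

/-- The Cartan matrix entry `a^v_{xy} = ⟨a_v(x), b_v(y)⟩`. -/
def cartan (v : RootDatum X H) (x y : X) : ℂ := v.b y (v.a x)

/-- `x` is reflectable at `v`. -/
def Reflectable (v : RootDatum X H) (x : X) : Prop :=
  (cartan v x x = 0 ∧ v.p x = 1) ∨
  (cartan v x x ≠ 0 ∧ v.p x = 0 ∧
    ∀ y, y ≠ x → ∃ n : ℕ, 2 * cartan v x y / cartan v x x = -(n : ℂ)) ∨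
  (cartan v x x ≠ 0 ∧ v.p x = 1 ∧
    ∀ y, y ≠ x → ∃ n : ℕ, cartan v x y / cartan v x x = -(n : ℂ))

/-- The anisotropic reflexion `r_x : v → v'`. -/
def IsAnisoReflexion (x : X) (v v' : RootDatum X H) : Prop :=
  Reflectable v x ∧ cartan v x x ≠ 0 ∧ v'.p = v.p ∧
  (∀ y, v'.a y = v.a y - (2 * cartan v y x / cartan v x x) • v.a x) ∧
  (∀ y, v'.b y = v.b y - (2 * cartan v x y / cartan v x x) • v.b x)

/-- The isotropic reflexion `r_x : v → v'`. -/
def IsIsoReflexion (x : X) (v v' : RootDatum X H) : Prop :=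
  Reflectable v x ∧ cartan v x x = 0 ∧
  v'.a x = -v.a x ∧ v'.b x = -v.b x ∧ v'.p x = v.p x ∧
  ∀ y, y ≠ x →
    (cartan v x y = 0 → v'.a y = v.a y ∧ v'.b y = v.b y ∧ v'.p y = v.p y) ∧
    (cartan v x y ≠ 0 →
      v'.a y = v.a y + (cartan v y x / cartan v x y) • v.a x ∧
      v'.b y = v.b y + v.b x ∧ v'.p y = v.p y + 1)

/-- A reflexion is either anisotropic or isotropic. -/
def IsReflexion (x : X) (v v' : RootDatum X H) : Prop :=
  IsAnisoReflexion x v v' ∨ IsIsoReflexion x v v'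

/-- A path of reflexions from `v` to `u`, recorded by the ordered list of its marks. -/
inductive IsPath : RootDatum X H → List X → RootDatum X H → Prop
  | nil (v : RootDatum X H) : IsPath v [] v
  | cons {v v' u : RootDatum X H} {x : X} {ms : List X} :
      IsReflexion x v v' → IsPath v' ms u → IsPath v (x :: ms) u

/-- A path of isotropic reflexions from `v` to `u`. -/
inductive IsIsoPath : RootDatum X H → List X → RootDatum X H → Prop
  | nil (v : RootDatum X H) : IsIsoPath v [] v
  | cons {v v' u : RootDatum X H} {x : X} {ms : List X} :
      IsIsoReflexion x v v' → IsIsoPath v' ms u → IsIsoPath v (x :: ms) u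

/-- The skeleton `Sk(v)`. -/
def Skeleton (v : RootDatum X H) : Set (RootDatum X H) := {u | ∃ ms : List X, IsPath v ms u}

/-- The spine `Sp(v)`. -/
def Spine (v : RootDatum X H) : Set (RootDatum X H) := {u | ∃ ms : List X, IsIsoPath v ms u}

/-- Admissibility of the component of `v`. -/
def Admissible (v : RootDatum X H) : Prop :=
  ∀ u ∈ Skeleton v, ∀ x, Reflectable u x → ∀ y, cartan u x y = 0 → cartan u y x = 0

/-- Full reflectability of the component of `v`. -/
def FullyReflectable (v : RootDatum X H) : Prop :=
  ∀ u ∈ Skeleton v, ∀ x, Reflectable u x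

/-- Anisotropic real roots. -/
def DeltaAn (v : RootDatum X H) : Set (Module.Dual ℂ H) :=
  {α | ∃ u x, u ∈ Skeleton v ∧ Reflectable u x ∧ cartan u x x ≠ 0 ∧ u.b x = α}

/-- Isotropic real roots. -/
def DeltaIs (v : RootDatum X H) : Set (Module.Dual ℂ H) :=
  {α | ∃ u x, u ∈ Skeleton v ∧ Reflectable u x ∧ cartan u x x = 0 ∧ u.b x = α}

/-- The coroot `α^∨ = (2 / a^u_{xx}) a_u(x)` of an anisotropic real root
(independent of the choice of presentation). -/
def coroot (v : RootDatum X H) (α : Module.Dual ℂ H) : H :=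
  if h : ∃ u x, u ∈ Skeleton v ∧ Reflectable u x ∧ cartan u x x ≠ 0 ∧ u.b x = α then
    (2 / cartan h.choose h.choose_spec.choose h.choose_spec.choose) •
      h.choose.a h.choose_spec.choose
  else 0

/-- The parity `p(α)` of an anisotropic real root. -/
def rootParity (v : RootDatum X H) (α : Module.Dual ℂ H) : ZMod 2 :=
  if h : ∃ u x, u ∈ Skeleton v ∧ Reflectable u x ∧ cartan u x x ≠ 0 ∧ u.b x = α then
    h.choose.p h.choose_spec.choose
  else 0

/-- Principal roots: anisotropic simple roots at vertices of the spine. -/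
def SigmaPr (v : RootDatum X H) : Set (Module.Dual ℂ H) :=
  {α | ∃ u x, u ∈ Spine v ∧ Reflectable u x ∧ cartan u x x ≠ 0 ∧ u.b x = α}

/-- The set `π`: even principal roots together with doubles of odd principal roots. -/
def piSet (v : RootDatum X H) : Set (Module.Dual ℂ H) :=
  {α | α ∈ SigmaPr v ∧ rootParity v α = 0} ∪
  {β | ∃ α ∈ SigmaPr v, rootParity v α = 1 ∧ β = (2 : ℂ) • α}

/-- The coroot of an element of `π` (with `(2α)^∨ = α^∨ / 2` for odd principal `α`). -/
def piCoroot (v : RootDatum X H) (β : Module.Dual ℂ H) : H :=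
  if β ∈ SigmaPr v then coroot v β else (2 : ℂ)⁻¹ • coroot v ((2 : ℂ)⁻¹ • β)

/-- The Weyl group: the subgroup of `GL(h^*)` generated by the reflections
`s_α : λ ↦ λ - ⟨α^∨, λ⟩ α` for `α ∈ Δ_an`. -/
def WeylGroup (v : RootDatum X H) :
    Subgroup (Module.Dual ℂ H ≃ₗ[ℂ] Module.Dual ℂ H) :=
  Subgroup.closure
    {w | ∃ α ∈ DeltaAn v, ∀ lam : Module.Dual ℂ H, w lam = lam - lam (coroot v α) • α}

/-- `Q^+_u`: nonnegative integral combinations of the simple roots at `u`. -/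
def QPlus (u : RootDatum X H) : Set (Module.Dual ℂ H) :=
  {μ | ∃ k : X → ℕ, μ = ∑ x, (k x : ℂ) • u.b x}

/-- `Q_u`: integral combinations of the simple roots at `u`. -/
def QLattice (u : RootDatum X H) : Set (Module.Dual ℂ H) :=
  {μ | ∃ k : X → ℤ, μ = ∑ x, (k x : ℂ) • u.b x}

/-- The convex cone of finite nonnegative real combinations of elements of `S`. -/
def coneR {M : Type*} [AddCommGroup M] [Module ℝ M] (S : Set M) : Set M :=
  {μ | ∃ (T : Finset M) (c : M → ℝ), ↑T ⊆ S ∧ (∀ m, 0 ≤ c m) ∧ μ = ∑ m ∈ T, c m • m}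

/-- The totally positive cone `Q^{++}_ℝ`. -/
def QppR (v : RootDatum X H) : Set (Module.Dual ℂ H) :=
  ⋂ u ∈ Skeleton v, coneR (Set.range u.b)

/-- Indecomposability of a square matrix. -/
def IsIndecMatrix {Y : Type*} [Fintype Y] (A : Y → Y → ℂ) : Prop :=
  Fintype.card Y = 1 ∨
  ∃ (s : ℕ) (e : Fin s ≃ Y), ∀ j : Fin s,
    A (e j) (e ⟨(j.1 + 1) % s, Nat.mod_lt _ j.pos⟩) ≠ 0

/-- Indecomposability of the component of `v`. -/
def IndecComp (v : RootDatum X H) : Prop :=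
  ∀ u ∈ Spine v, IsIndecMatrix (cartan u)

/-- The Cartan matrix at `v` as a matrix. -/
def cartanMatrix (v : RootDatum X H) : Matrix X X ℂ := Matrix.of fun x y => cartan v x y

/-- A Kac-Moody component: fully reflectable, admissible and `dim h = |X| + corank A^v`. -/
def IsKacMoodyComp (v : RootDatum X H) : Prop :=
  FullyReflectable v ∧ Admissible v ∧
  Module.finrank ℂ H = Fintype.card X + (Fintype.card X - (cartanMatrix v).rank)

/-- Type (Aff): the real span of `Q^{++}_ℝ` is one-dimensional. -/
def TypeAff (v : RootDatum X H) : Prop :=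
  Module.finrank ℝ (Submodule.span ℝ (QppR v)) = 1

/-- The set `π_S` of `S`-principal elements. -/
def piS (v : RootDatum X H) : Set (Module.Dual ℂ H) :=
  {α | ∃ u x, u ∈ Spine v ∧
    ((u.p x = 0 ∧ α = u.b x) ∨ (u.p x = 1 ∧ cartan u x x ≠ 0 ∧ α = (2 : ℂ) • u.b x))}

/-- `D`-equivalence of Cartan data. -/
def DEquivTo (u v : RootDatum X H) : Prop :=
  u.p = v.p ∧ ∃ D : X → ℂ, (∀ x, D x ≠ 0) ∧ ∀ x y, cartan u x y = D x * cartan v x y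

/-- `Sk^D(v)`. -/
def SkD (v : RootDatum X H) : Set (RootDatum X H) := {u | u ∈ Skeleton v ∧ DEquivTo u v}

/-- `Sp^D(v)`. -/
def SpD (v : RootDatum X H) : Set (RootDatum X H) := {u | u ∈ Spine v ∧ DEquivTo u v}

/-- `StarRel v u₁ u₂ u₃` says `u₁ * u₂ = u₃`, i.e. `σ^{u₁}(u₂) = u₃`: some path from `v`
ends at `u₂` and its namesake path from `u₁` ends at `u₃`. -/
def StarRel (v u₁ u₂ u₃ : RootDatum X H) : Prop :=
  ∃ ms : List X, IsPath v ms u₂ ∧ IsPath u₁ ms u₃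

/-- `u` is the vertex `w·v` for `w` in the Weyl group. -/
def VertexOf (v : RootDatum X H) (w : Module.Dual ℂ H ≃ₗ[ℂ] Module.Dual ℂ H)
    (u : RootDatum X H) : Prop :=
  u ∈ Skeleton v ∧ ∀ x, u.b x = w (v.b x)

end

section Aux

set_option linter.unusedSectionVars false

variable {X : Type*} [Fintype X] {H : Type*} [AddCommGroup H] [Module ℂ H]

theorem rd_ext {u v : RootDatum X H} (ha : u.a = v.a) (hb : u.b = v.b)
    (hp : u.p = v.p) : u = v := by
  cases u; cases v; simp_all

theorem linIndep_aux {M : Type*} [AddCommGroup M] [Module ℂ M] {f : X → M}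
    (hf : LinearIndependent ℂ f) (x : X) (c : X → ℂ) :
    LinearIndependent ℂ (fun y => if y = x then -f x else f y + c y • f x) := by
  classical
  rw [Fintype.linearIndependent_iff] at hf ⊢
  intro t ht
  rw [← Finset.sum_erase_add _ _ (Finset.mem_univ x), if_pos rfl] at ht
  have e1 : ∑ y ∈ Finset.univ.erase x, t y • (if y = x then -f x else f y + c y • f x)
      = ∑ y ∈ Finset.univ.erase x, (t y • f y + (t y * c y) • f x) :=
    Finset.sum_congr rfl fun y hy => by
      rw [if_neg (Finset.ne_of_mem_erase hy), smul_add, smul_smul]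
  rw [e1, Finset.sum_add_distrib, ← Finset.sum_smul] at ht
  have key : ∑ y, (if y = x then (∑ z ∈ Finset.univ.erase x, t z * c z) - t x else t y) • f y
      = 0 := by
    rw [← Finset.sum_erase_add _ _ (Finset.mem_univ x), if_pos rfl]
    have e2 : ∑ y ∈ Finset.univ.erase x,
        (if y = x then (∑ z ∈ Finset.univ.erase x, t z * c z) - t x else t y) • f y
        = ∑ y ∈ Finset.univ.erase x, t y • f y :=
      Finset.sum_congr rfl fun y hy => by rw [if_neg (Finset.ne_of_mem_erase hy)]
    rw [e2, sub_smul, ← ht]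
    simp only [smul_neg]
    abel
  have hz := hf _ key
  intro y
  by_cases hy : y = x
  · have h1 := hz y
    rw [if_pos hy] at h1
    have h2 : ∀ z ∈ Finset.univ.erase x, t z * c z = 0 := fun z hz' => by
      have := hz z
      rw [if_neg (Finset.ne_of_mem_erase hz')] at this
      rw [this, zero_mul]
    rw [Finset.sum_eq_zero h2, zero_sub, neg_eq_zero] at h1
    rw [hy]; exact h1
  · have := hz y
    rwa [if_neg hy] at this

theorem cartan_iso {x : X} {w w' : RootDatum X H} (h : IsIsoReflexion x w w') (y z : X) :
    cartan w' y z =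
      if y = x then (if z = x then 0 else -(cartan w x z))
      else if z = x then -(cartan w y x)
      else cartan w y z + (if cartan w x z = 0 then 0 else cartan w y x)
           + (if cartan w x y = 0 then 0 else cartan w y x / cartan w x y * cartan w x z) := by
  obtain ⟨hrefl, hxx, hax, hbx, hpx, hrest⟩ := h
  have hxx' : w.b x (w.a x) = 0 := hxx
  by_cases hy : y = x
  · rw [if_pos hy, hy]
    by_cases hz : z = x
    · rw [if_pos hz, hz]
      show w'.b x (w'.a x) = 0
      rw [hax, hbx]
      simp only [LinearMap.neg_apply, map_neg, neg_neg]
      exact hxx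
    · rw [if_neg hz]
      by_cases hc : cartan w x z = 0
      · obtain ⟨_, hbz, _⟩ := (hrest z hz).1 hc
        show w'.b z (w'.a x) = -(cartan w x z)
        rw [hax, hbz, map_neg]; rfl
      · obtain ⟨_, hbz, _⟩ := (hrest z hz).2 hc
        show w'.b z (w'.a x) = -(cartan w x z)
        rw [hax, hbz, map_neg, LinearMap.add_apply]
        show -(cartan w x z + w.b x (w.a x)) = -(cartan w x z)
        rw [hxx', add_zero]
  · rw [if_neg hy]
    by_cases hz : z = x
    · rw [if_pos hz, hz]
      by_cases hc : cartan w x y = 0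
      · obtain ⟨hay, _, _⟩ := (hrest y hy).1 hc
        show w'.b x (w'.a y) = -(cartan w y x)
        rw [hay, hbx]; rfl
      · obtain ⟨hay, _, _⟩ := (hrest y hy).2 hc
        show w'.b x (w'.a y) = -(cartan w y x)
        rw [hay, hbx, map_add, map_smul]
        simp only [LinearMap.neg_apply, hxx', neg_zero, smul_zero, add_zero]
        rfl
    · rw [if_neg hz]
      by_cases hcy : cartan w x y = 0
      · obtain ⟨hay, _, _⟩ := (hrest y hy).1 hcy
        rw [if_pos hcy, add_zero]
        by_cases hcz : cartan w x z = 0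
        · obtain ⟨_, hbz, _⟩ := (hrest z hz).1 hcz
          rw [if_pos hcz, add_zero]
          show w'.b z (w'.a y) = cartan w y z
          rw [hay, hbz]; rfl
        · obtain ⟨_, hbz, _⟩ := (hrest z hz).2 hcz
          rw [if_neg hcz]
          show w'.b z (w'.a y) = cartan w y z + cartan w y x
          rw [hay, hbz, LinearMap.add_apply]; rfl
      · obtain ⟨hay, _, _⟩ := (hrest y hy).2 hcy
        rw [if_neg hcy]
        by_cases hcz : cartan w x z = 0
        · obtain ⟨_, hbz, _⟩ := (hrest z hz).1 hcz
          rw [if_pos hcz, add_zero]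
          show w'.b z (w'.a y) = cartan w y z + cartan w y x / cartan w x y * cartan w x z
          rw [hay, hbz, map_add, map_smul, smul_eq_mul]
          show cartan w y z + cartan w y x / cartan w x y * cartan w x z
              = cartan w y z + cartan w y x / cartan w x y * cartan w x z
          rfl
        · obtain ⟨_, hbz, _⟩ := (hrest z hz).2 hcz
          rw [if_neg hcz]
          show w'.b z (w'.a y) = cartan w y z + cartan w y x
              + cartan w y x / cartan w x y * cartan w x z
          rw [hay, hbz, LinearMap.add_apply, map_add, map_add, map_smul, map_smul, smul_eq_mul,
            smul_eq_mul]
          show cartan w y z + cartan w y x / cartan w x y * cartan w x z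
              + (cartan w y x + cartan w y x / cartan w x y * w.b x (w.a x))
              = cartan w y z + cartan w y x + cartan w y x / cartan w x y * cartan w x z
          rw [hxx', mul_zero, add_zero]
          ring

theorem p_one_of_iso {x : X} {w : RootDatum X H} (hrefl : Reflectable w x)
    (hxx : cartan w x x = 0) : w.p x = 1 := by
  rcases hrefl with ⟨_, h⟩ | ⟨h, _⟩ | ⟨h, _⟩
  · exact h
  · exact absurd hxx h
  · exact absurd hxx h

theorem iso_symm {x : X} {a b : RootDatum X H} (h : IsIsoReflexion x a b) :
    IsIsoReflexion x b a := by
  have hC := cartan_iso h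
  obtain ⟨hrefl, hxx, hax, hbx, hpx, hrest⟩ := h
  have hp1 : a.p x = 1 := p_one_of_iso hrefl hxx
  have cxx : cartan b x x = 0 := by rw [hC]; simp
  refine ⟨Or.inl ⟨cxx, by rw [hpx, hp1]⟩, cxx, by rw [hax, neg_neg], by rw [hbx, neg_neg],
    hpx.symm, ?_⟩
  intro y hy
  have cxy : cartan b x y = -(cartan a x y) := by rw [hC]; simp [hy]
  have cyx : cartan b y x = -(cartan a y x) := by rw [hC]; simp [hy]
  constructor
  · intro h0
    have h0' : cartan a x y = 0 := by rwa [cxy, neg_eq_zero] at h0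
    obtain ⟨e1, e2, e3⟩ := (hrest y hy).1 h0'
    exact ⟨e1.symm, e2.symm, e3.symm⟩
  · intro h0
    have h0' : cartan a x y ≠ 0 := fun hc => h0 (by rw [cxy, hc, neg_zero])
    obtain ⟨e1, e2, e3⟩ := (hrest y hy).2 h0'
    refine ⟨?_, ?_, ?_⟩
    · rw [e1, cyx, cxy, hax, neg_div_neg_eq, smul_neg]
      abel
    · rw [e2, hbx]
      abel
    · rw [e3, add_assoc]
      norm_num
      exact (add_zero _).symm

theorem iso_transfer {x : X} {w w' u : RootDatum X H} (hiso : IsIsoReflexion x w w')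
    (hde : DEquivTo u w) : ∃ u', IsIsoReflexion x u u' ∧ DEquivTo u' w' := by
  classical
  obtain ⟨hpe, D, hD0, hDc⟩ := hde
  have hCw := cartan_iso hiso
  obtain ⟨hrefl, hxx, hax, hbx, hpx, hrest⟩ := hiso
  have huxx : cartan u x x = 0 := by rw [hDc, hxx, mul_zero]
  have hzero : ∀ y, cartan u x y = 0 ↔ cartan w x y = 0 := fun y => by
    rw [hDc]; simp [hD0 x]
  have hp1 : u.p x = 1 := by
    rw [show u.p x = w.p x from congrFun hpe x]
    exact p_one_of_iso hrefl hxx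
  set ca : X → ℂ := fun y => if cartan u x y = 0 then 0 else cartan u y x / cartan u x y with hca
  set cb : X → ℂ := fun y => if cartan u x y = 0 then 0 else 1 with hcb
  set u' : RootDatum X H := ⟨fun y => if y = x then -u.a x else u.a y + ca y • u.a x,
      fun y => if y = x then -u.b x else u.b y + cb y • u.b x,
      fun y => if y = x then u.p x else u.p y + (if cartan u x y = 0 then 0 else 1),
      linIndep_aux u.lin_indep_a x ca, linIndep_aux u.lin_indep_b x cb⟩ with hu'
  have hiso_u : IsIsoReflexion x u u' := by
    refine ⟨Or.inl ⟨huxx, hp1⟩, huxx, by simp [hu'], by simp [hu'], by simp [hu'], ?_⟩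
    intro y hy
    constructor
    · intro h0
      refine ⟨?_, ?_, ?_⟩ <;> simp [hu', hy, hca, hcb, h0]
    · intro h0
      refine ⟨?_, ?_, ?_⟩ <;> simp [hu', hy, hca, hcb, h0]
  refine ⟨u', hiso_u, ?_, D, hD0, ?_⟩
  · -- parities agree
    funext y
    by_cases hy : y = x
    · have e1 : u'.p y = u.p x := by simp [hu', hy]
      rw [e1, hy, hpx]
      exact congrFun hpe x
    · by_cases hc : cartan w x y = 0
      · obtain ⟨_, _, e3⟩ := (hrest y hy).1 hc
        have e1 : u'.p y = u.p y := by simp [hu', hy, (hzero y).mpr hc]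
        rw [e1, e3]
        exact congrFun hpe y
      · obtain ⟨_, _, e3⟩ := (hrest y hy).2 hc
        have hc' : ¬ cartan u x y = 0 := fun h0 => hc ((hzero y).mp h0)
        have e1 : u'.p y = u.p y + 1 := by simp [hu', hy, hc']
        rw [e1, e3, congrFun hpe y]
  · -- Cartan matrices D-related
    intro y z
    rw [cartan_iso hiso_u y z, hCw y z]
    by_cases hy : y = x
    · by_cases hz : z = x
      · simp [hy, hz]
      · rw [if_pos hy, if_pos hy, if_neg hz, if_neg hz, hy, hDc x z]
        ring
    · by_cases hz : z = x
      · rw [if_neg hy, if_neg hy, if_pos hz, if_pos hz, hDc y x]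
        ring
      · simp only [if_neg hy, if_neg hz]
        by_cases hcz : cartan w x z = 0
        · by_cases hcy' : cartan w x y = 0
          · simp only [if_pos ((hzero z).mpr hcz), if_pos ((hzero y).mpr hcy'), if_pos hcz,
              if_pos hcy', add_zero]
            exact hDc y z
          · have h1 : ¬ cartan u x y = 0 := fun h0 => hcy' ((hzero y).mp h0)
            simp only [if_pos ((hzero z).mpr hcz), if_neg h1, if_pos hcz, if_neg hcy', add_zero]
            rw [(hzero z).mpr hcz, hcz, mul_zero, mul_zero, add_zero, add_zero]
            exact hDc y z
        · by_cases hcy' : cartan w x y = 0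
          · have h1 : ¬ cartan u x z = 0 := fun h0 => hcz ((hzero z).mp h0)
            simp only [if_neg h1, if_pos ((hzero y).mpr hcy'), if_neg hcz, if_pos hcy', add_zero]
            rw [hDc y z, hDc y x]
            ring
          · have h1 : ¬ cartan u x z = 0 := fun h0 => hcz ((hzero z).mp h0)
            have h2 : ¬ cartan u x y = 0 := fun h0 => hcy' ((hzero y).mp h0)
            simp only [if_neg h1, if_neg h2, if_neg hcz, if_neg hcy']
            rw [hDc y z, hDc y x, hDc x y, hDc x z]
            field_simp [hD0 x, hcy']

theorem iso_det {x : X} {v a b : RootDatum X H} (h1 : IsIsoReflexion x v a)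
    (h2 : IsIsoReflexion x v b) : a = b := by
  obtain ⟨_, _, ha1, hb1, hp1, hr1⟩ := h1
  obtain ⟨_, _, ha2, hb2, hp2, hr2⟩ := h2
  refine rd_ext (funext fun y => ?_) (funext fun y => ?_) (funext fun y => ?_) <;>
    by_cases hy : y = x
  · rw [hy, ha1, ha2]
  · by_cases hc : cartan v x y = 0
    · rw [((hr1 y hy).1 hc).1, ((hr2 y hy).1 hc).1]
    · rw [((hr1 y hy).2 hc).1, ((hr2 y hy).2 hc).1]
  · rw [hy, hb1, hb2]
  · by_cases hc : cartan v x y = 0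
    · rw [((hr1 y hy).1 hc).2.1, ((hr2 y hy).1 hc).2.1]
    · rw [((hr1 y hy).2 hc).2.1, ((hr2 y hy).2 hc).2.1]
  · rw [hy, hp1, hp2]
  · by_cases hc : cartan v x y = 0
    · rw [((hr1 y hy).1 hc).2.2, ((hr2 y hy).1 hc).2.2]
    · rw [((hr1 y hy).2 hc).2.2, ((hr2 y hy).2 hc).2.2]

theorem isoPath_det {l : List X} {v a b : RootDatum X H} (h1 : IsIsoPath v l a)
    (h2 : IsIsoPath v l b) : a = b := by
  induction l generalizing v with
  | nil => cases h1; cases h2; rfl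
  | cons x l ih =>
    cases h1 with
    | cons hr1 hp1 =>
      cases h2 with
      | cons hr2 hp2 =>
        rw [iso_det hr1 hr2] at hp1
        exact ih hp1 hp2

theorem isoPath_append {a b c : RootDatum X H} {l l' : List X} (h1 : IsIsoPath a l b) :
    IsIsoPath b l' c → IsIsoPath a (l ++ l') c := by
  induction h1 with
  | nil _ => intro h2; simpa using h2
  | cons hr _ ih => intro h2; exact .cons hr (ih h2)

theorem isoPath_reverse {a b : RootDatum X H} {l : List X} (h : IsIsoPath a l b) :
    IsIsoPath b l.reverse a := by
  induction h with
  | nil v => exact .nil v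
  | cons hr _ ih =>
    rw [List.reverse_cons]
    exact isoPath_append ih (.cons (iso_symm hr) (.nil _))

theorem path_transfer {l : List X} {w w' u : RootDatum X H} (h : IsIsoPath w l w')
    (hde : DEquivTo u w) : ∃ u', IsIsoPath u l u' ∧ DEquivTo u' w' := by
  induction h generalizing u with
  | nil _ => exact ⟨u, .nil _, hde⟩
  | cons hr _ ih =>
    obtain ⟨u₂, hru, hde₂⟩ := iso_transfer hr hde
    obtain ⟨u'', hp, hd⟩ := ih hde₂
    exact ⟨u'', .cons hru hp, hd⟩

end Aux

/-- For an indecomposable Kac-Moody component of type (Aff) with finitely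
many Cartan matrices along the spine, `Sp^D(v)` is finite iff the spine is finite. -/
theorem stmt18 {X : Type*} [Fintype X] {H : Type*} [AddCommGroup H] [Module ℂ H]
    [FiniteDimensional ℂ H] (v : RootDatum X H)
    (hKM : IsKacMoodyComp v) (hind : IndecComp v) (haff : TypeAff v)
    (hfin : (cartan '' Spine v).Finite) :
    (SpD v).Finite ↔ (Spine v).Finite := by
  classical
  constructor
  · intro hSpD
    set F : RootDatum X H → (X → X → ℂ) × (X → ZMod 2) := fun u => (cartan u, u.p) with hF
    have himg : (F '' Spine v).Finite := by
      refine Set.Finite.subset (hfin.prod (Set.finite_univ (α := X → ZMod 2))) ?_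
      rintro _ ⟨u, hu, rfl⟩
      exact ⟨⟨u, hu, rfl⟩, Set.mem_univ _⟩
    have hcover : Spine v = ⋃ b ∈ F '' Spine v, {u | u ∈ Spine v ∧ F u = b} := by
      ext u
      constructor
      · intro hu
        exact Set.mem_biUnion ⟨u, hu, rfl⟩ ⟨hu, rfl⟩
      · intro hu
        obtain ⟨_, _, hu2, _⟩ := Set.mem_iUnion₂.mp hu
        exact hu2
    rw [hcover]
    refine Set.Finite.biUnion himg ?_
    rintro b hb
    by_cases hne : ({u | u ∈ Spine v ∧ F u = b}).Nonempty
    · obtain ⟨w, hwSp, hwF⟩ := hne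
      obtain ⟨ns, hns⟩ := hwSp
      have hrev : IsIsoPath w ns.reverse v := isoPath_reverse hns
      set g : RootDatum X H → RootDatum X H :=
        fun u => if h : ∃ u', IsIsoPath u ns.reverse u' then h.choose else u with hg
      have hde_of : ∀ u, u ∈ Spine v → F u = b → DEquivTo u w := by
        intro u _ huF
        have h1 : cartan u = cartan w := by
          have := huF.trans hwF.symm
          exact congrArg Prod.fst this
        have h2 : u.p = w.p := by
          have := huF.trans hwF.symm
          exact congrArg Prod.snd this
        exact ⟨h2, fun _ => 1, fun _ => one_ne_zero,
          fun a b' => by rw [one_mul, h1]⟩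
      refine Set.Finite.of_finite_image (f := g) ?_ ?_
      · refine hSpD.subset ?_
        rintro _ ⟨u, ⟨huSp, huF⟩, rfl⟩
        obtain ⟨u', hupath, hude⟩ := path_transfer hrev (hde_of u huSp huF)
        have hex : ∃ z, IsIsoPath u ns.reverse z := ⟨u', hupath⟩
        have hgu : g u = u' := by
          rw [hg]
          simp only [dif_pos hex]
          exact isoPath_det hex.choose_spec hupath
        rw [hgu]
        obtain ⟨ms, hms⟩ := huSp
        exact ⟨⟨ms ++ ns.reverse, isoPath_append hms hupath⟩, hude⟩
      · rintro u₁ ⟨h1Sp, h1F⟩ u₂ ⟨h2Sp, h2F⟩ heq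
        obtain ⟨u₁', hp1, _⟩ := path_transfer hrev (hde_of u₁ h1Sp h1F)
        obtain ⟨u₂', hp2, _⟩ := path_transfer hrev (hde_of u₂ h2Sp h2F)
        have hex1 : ∃ z, IsIsoPath u₁ ns.reverse z := ⟨u₁', hp1⟩
        have hex2 : ∃ z, IsIsoPath u₂ ns.reverse z := ⟨u₂', hp2⟩
        have e1 : IsIsoPath u₁ ns.reverse (g u₁) := by
          rw [hg]; simp only [dif_pos hex1]; exact hex1.choose_spec
        have e2 : IsIsoPath u₂ ns.reverse (g u₂) := by
          rw [hg]; simp only [dif_pos hex2]; exact hex2.choose_spec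
        rw [heq] at e1
        have r1 := isoPath_reverse e1
        have r2 := isoPath_reverse e2
        exact isoPath_det r1 r2
    · rw [Set.not_nonempty_iff_eq_empty.mp hne]
      exact Set.finite_empty
  · intro h
    exact h.subset fun u hu => hu.1
end KMS
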